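/- For every D ≥ 0 and C ≥ 0, the rate-distortion-cost function admits the dual representation R(D,C) = max over s ≤ 0 and m ≤ 0 of ( R_{s,m} + s (D − D_{s,m}) + m (C − C_{s,m}) ). -/

import Mathlib

open Finset

noncomputable section

/-- A probability mass function on a finite alphabet. -/
def IsPMF {α : Type} [Fintype α] (p : α → ℝ) : Prop :=
  (∀ a, 0 ≤ p a) ∧ ∑ a, p a = 1

/-- A conditional probability mass function. -/
def IsCondPMF {α β : Type} [Fintype α] [Fintype β] (p : α → β → ℝ) : Prop :=
  ∀ a, IsPMF (p a)

/-- A Shannon strategy: an estimate function `Y → Xh` together with an action in `A`. -/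
abbrev Strat (Y Xh A : Type) : Type := (Y → Xh) × A

variable {X Y A Xh : Type} [Fintype X] [Fintype Y] [Fintype A] [Fintype Xh]
  [DecidableEq X] [DecidableEq Y] [DecidableEq A] [DecidableEq Xh]


/-- Joint pmf `P_{X,Y,T}(x,y,t) = P_X(x) P_{T|X}(t|x) P_{Y|X,A}(y|x,a(t))`. -/
def pXYT (PX : X → ℝ) (PW : A → X → Y → ℝ) (PT : X → Strat Y Xh A → ℝ)
    (x : X) (y : Y) (t : Strat Y Xh A) : ℝ :=
  PX x * PT x t * PW t.2 x y

/-- Action marginal `P_A`. -/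
def pA (PX : X → ℝ) (PT : X → Strat Y Xh A → ℝ) (a : A) : ℝ :=
  ∑ x, ∑ t, if t.2 = a then PX x * PT x t else 0

/-- Marginal `P_{X,A}`. -/
def pXA (PX : X → ℝ) (PT : X → Strat Y Xh A → ℝ) (x : X) (a : A) : ℝ :=
  ∑ t, if t.2 = a then PX x * PT x t else 0

/-- Marginal `P_{Y,A}`. -/
def pYA (PX : X → ℝ) (PW : A → X → Y → ℝ) (PT : X → Strat Y Xh A → ℝ)
    (y : Y) (a : A) : ℝ :=
  ∑ x, ∑ t, if t.2 = a then pXYT PX PW PT x y t else 0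

/-- Marginal `P_{X,Y,A}`. -/
def pXYA (PX : X → ℝ) (PW : A → X → Y → ℝ) (PT : X → Strat Y Xh A → ℝ)
    (x : X) (y : Y) (a : A) : ℝ :=
  ∑ t, if t.2 = a then pXYT PX PW PT x y t else 0

/-- Marginal `P_{Y,T}`. -/
def pYT (PX : X → ℝ) (PW : A → X → Y → ℝ) (PT : X → Strat Y Xh A → ℝ)
    (y : Y) (t : Strat Y Xh A) : ℝ :=
  ∑ x, pXYT PX PW PT x y t

/-- Mutual information `I(X; a(T))` (base-2 logarithms). -/
def IXA (PX : X → ℝ) (PT : X → Strat Y Xh A → ℝ) : ℝ :=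
  ∑ x, ∑ a, pXA PX PT x a * Real.logb 2 (pXA PX PT x a / (PX x * pA PX PT a))

/-- Conditional mutual information `I(X; T | Y, a(T))` (base-2 logarithms). -/
def IXTcondYA (PX : X → ℝ) (PW : A → X → Y → ℝ) (PT : X → Strat Y Xh A → ℝ) : ℝ :=
  ∑ x, ∑ y, ∑ t, pXYT PX PW PT x y t *
    Real.logb 2 (pXYT PX PW PT x y t * pYA PX PW PT y t.2 /
      (pXYA PX PW PT x y t.2 * pYT PX PW PT y t))

/-- Average distortion `E[d(X, T(Y))]`. -/
def expDist (PX : X → ℝ) (PW : A → X → Y → ℝ) (dist : X → Xh → ℝ)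
    (PT : X → Strat Y Xh A → ℝ) : ℝ :=
  ∑ x, ∑ y, ∑ t, pXYT PX PW PT x y t * dist x (t.1 y)

/-- Average action cost `E[Δ(a(T))]`. -/
def expCost (PX : X → ℝ) (cost : A → ℝ) (PT : X → Strat Y Xh A → ℝ) : ℝ :=
  ∑ x, ∑ t, PX x * PT x t * cost t.2

/-- The rate-distortion-cost function in the Shannon-strategy formulation. -/
def RDC (PX : X → ℝ) (PW : A → X → Y → ℝ) (dist : X → Xh → ℝ) (cost : A → ℝ)
    (D C : ℝ) : ℝ :=
  sInf { r : ℝ | ∃ PT : X → Strat Y Xh A → ℝ, IsCondPMF PT ∧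
    expDist PX PW dist PT ≤ D ∧ expCost PX cost PT ≤ C ∧
    r = IXA PX PT + IXTcondYA PX PW PT }
/-- The Lagrangian functional
`I(X;a(T)) + I(X;T|Y,a(T)) − s E[d(X,T(Y))] − m E[Δ(a(T))]`. -/
def Jfun (PX : X → ℝ) (PW : A → X → Y → ℝ) (dist : X → Xh → ℝ) (cost : A → ℝ)
    (s m : ℝ) (PT : X → Strat Y Xh A → ℝ) : ℝ :=
  IXA PX PT + IXTcondYA PX PW PT - s * expDist PX PW dist PT - m * expCost PX cost PT

/-- The unconstrained minimum `min_{P_{T|X}} { I(X;a(T)) + I(X;T|Y,a(T)) − s E[d] − m E[Δ] }`. -/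
def Jmin (PX : X → ℝ) (PW : A → X → Y → ℝ) (dist : X → Xh → ℝ) (cost : A → ℝ)
    (s m : ℝ) : ℝ :=
  sInf { r : ℝ | ∃ PT : X → Strat Y Xh A → ℝ, IsCondPMF PT ∧
    r = Jfun PX PW dist cost s m PT }
namespace RDCaux
set_option linter.unusedSectionVars false

open Finset Real

variable {X Y A Xh : Type} [Fintype X] [Fintype Y] [Fintype A] [Fintype Xh]
  [DecidableEq X] [DecidableEq Y] [DecidableEq A] [DecidableEq Xh]

/-- marginal of `T`. -/
def pT (PX : X → ℝ) (PT : X → Strat Y Xh A → ℝ) (t : Strat Y Xh A) : ℝ :=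
  ∑ x, PX x * PT x t

lemma sum_fiber_mul (f : Strat Y Xh A → ℝ) (g : A → ℝ) :
    ∑ a : A, (∑ t, if t.2 = a then f t else 0) * g a = ∑ t, f t * g t.2 := by
  calc ∑ a : A, (∑ t, if t.2 = a then f t else 0) * g a
      = ∑ a : A, ∑ t, (if t.2 = a then f t * g a else 0) := by
        refine Finset.sum_congr rfl fun a _ => ?_
        rw [Finset.sum_mul]
        exact Finset.sum_congr rfl fun t _ => by split <;> simp
    _ = ∑ t, ∑ a : A, (if t.2 = a then f t * g a else 0) := Finset.sum_comm
    _ = ∑ t, f t * g t.2 := Finset.sum_congr rfl fun t _ => by simp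

lemma sum_fiber (f : Strat Y Xh A → ℝ) :
    ∑ a : A, (∑ t, if t.2 = a then f t else 0) = ∑ t, f t := by
  simpa using sum_fiber_mul f (fun _ => 1)

variable (PX : X → ℝ) (PW : A → X → Y → ℝ) (P : X → Strat Y Xh A → ℝ)

lemma pXYA_eq (x : X) (y : Y) (a : A) :
    pXYA PX PW P x y a = pXA PX P x a * PW a x y := by
  unfold pXYA pXA pXYT
  rw [Finset.sum_mul]
  refine Finset.sum_congr rfl fun t _ => ?_
  by_cases h : t.2 = a <;> simp [h]

lemma pYA_eq (y : Y) (a : A) :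
    pYA PX PW P y a = ∑ t, if t.2 = a then pYT PX PW P y t else 0 := by
  unfold pYA pYT
  rw [Finset.sum_comm]
  exact Finset.sum_congr rfl fun t _ => by by_cases h : t.2 = a <;> simp [h]

lemma pA_eq_sum_pXA (a : A) : pA PX P a = ∑ x, pXA PX P x a := rfl

lemma pA_eq_fiber_pT (a : A) :
    pA PX P a = ∑ t, if t.2 = a then pT PX P t else 0 := by
  unfold pA pT
  rw [Finset.sum_comm]
  exact Finset.sum_congr rfl fun t _ => by by_cases h : t.2 = a <;> simp [h]

lemma sum_y_pXYT (hPW : ∀ a x, IsPMF (PW a x)) (x : X) (t : Strat Y Xh A) :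
    ∑ y, pXYT PX PW P x y t = PX x * P x t := by
  unfold pXYT
  rw [← Finset.mul_sum, (hPW t.2 x).2, mul_one]

section nonneg

variable (hPX : ∀ x, 0 ≤ PX x) (hPW : ∀ a x y, 0 ≤ PW a x y) (hP : ∀ x t, 0 ≤ P x t)

include hPX hPW hP in
lemma pXYT_nonneg (x y t) : 0 ≤ pXYT PX PW P x y t :=
  mul_nonneg (mul_nonneg (hPX x) (hP x t)) (hPW t.2 x y)

include hPX hP in
lemma pXA_nonneg (x a) : 0 ≤ pXA PX P x a :=
  Finset.sum_nonneg fun t _ => by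
    split
    · exact mul_nonneg (hPX x) (hP x t)
    · exact le_rfl

include hPX hP in
lemma pA_nonneg (a) : 0 ≤ pA PX P a :=
  Finset.sum_nonneg fun x _ => pXA_nonneg PX P hPX hP x a

include hPX hP in
lemma pT_nonneg (t) : 0 ≤ pT PX P t :=
  Finset.sum_nonneg fun x _ => mul_nonneg (hPX x) (hP x t)

include hPX hPW hP in
lemma pYT_nonneg (y t) : 0 ≤ pYT PX PW P y t :=
  Finset.sum_nonneg fun x _ => pXYT_nonneg PX PW P hPX hPW hP x y t

include hPX hPW hP in
lemma pYA_nonneg (y a) : 0 ≤ pYA PX PW P y a := by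
  rw [pYA_eq]
  refine Finset.sum_nonneg fun t _ => ?_
  split
  · exact pYT_nonneg PX PW P hPX hPW hP y t
  · exact le_rfl

include hPX hPW hP in
lemma pXYA_nonneg (x y a) : 0 ≤ pXYA PX PW P x y a := by
  rw [pXYA_eq]
  exact mul_nonneg (pXA_nonneg PX P hPX hP x a) (hPW a x y)

include hPX hPW hP in
lemma pXYT_le_pYT (x y t) : pXYT PX PW P x y t ≤ pYT PX PW P y t :=
  Finset.single_le_sum (fun x' _ => pXYT_nonneg PX PW P hPX hPW hP x' y t) (mem_univ x)

include hPX hPW hP in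
lemma pYT_le_pYA (y t) : pYT PX PW P y t ≤ pYA PX PW P y t.2 := by
  rw [pYA_eq]
  have hnn : ∀ t' ∈ (univ : Finset (Strat Y Xh A)),
      0 ≤ if t'.2 = t.2 then pYT PX PW P y t' else 0 := by
    intro t' _
    split
    · exact pYT_nonneg PX PW P hPX hPW hP y t'
    · exact le_rfl
  have := Finset.single_le_sum hnn (mem_univ t)
  simpa using this

include hPX hP in
lemma entry_le_pXA (x t) : PX x * P x t ≤ pXA PX P x t.2 := by
  have hnn : ∀ t' ∈ (univ : Finset (Strat Y Xh A)),
      0 ≤ if t'.2 = t.2 then PX x * P x t' else 0 := by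
    intro t' _
    split
    · exact mul_nonneg (hPX x) (hP x t')
    · exact le_rfl
  have := Finset.single_le_sum hnn (mem_univ t)
  simpa [pXA] using this

include hPX hP in
lemma pXA_le_pA (x a) : pXA PX P x a ≤ pA PX P a := by
  rw [pA_eq_sum_pXA]
  exact Finset.single_le_sum (fun x' _ => pXA_nonneg PX P hPX hP x' a) (mem_univ x)

end nonneg

section mass

variable (hPX : IsPMF PX) (hPW : ∀ a x, IsPMF (PW a x)) (hP : IsCondPMF P)

include hPX hP in
lemma sum_pA_eq_one : ∑ a, pA PX P a = 1 := by
  have h1 : ∑ a, pA PX P a = ∑ x, ∑ a, pXA PX P x a := Finset.sum_comm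
  rw [h1]
  have h2 : ∀ x, ∑ a, pXA PX P x a = PX x := by
    intro x
    unfold pXA
    rw [sum_fiber (f := fun t => PX x * P x t), ← Finset.mul_sum, (hP x).2, mul_one]
  rw [Finset.sum_congr rfl fun x _ => h2 x, hPX.2]

include hPX hPW hP in
lemma sum_pYT_eq_one : ∑ y, ∑ t, pYT PX PW P y t = 1 := by
  unfold pYT
  have h1 : ∑ y, ∑ t, ∑ x, pXYT PX PW P x y t = ∑ x, ∑ t, ∑ y, pXYT PX PW P x y t :=
    calc ∑ y, ∑ t, ∑ x, pXYT PX PW P x y t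
        = ∑ y, ∑ x, ∑ t, pXYT PX PW P x y t :=
          Finset.sum_congr rfl fun y _ => Finset.sum_comm
      _ = ∑ x, ∑ y, ∑ t, pXYT PX PW P x y t := Finset.sum_comm
      _ = ∑ x, ∑ t, ∑ y, pXYT PX PW P x y t :=
          Finset.sum_congr rfl fun x _ => Finset.sum_comm
  rw [h1]
  have h2 : ∀ x, ∑ t, ∑ y, pXYT PX PW P x y t = PX x := by
    intro x
    have : ∀ t, ∑ y, pXYT PX PW P x y t = PX x * P x t :=
      fun t => sum_y_pXYT PX PW P hPW x t
    rw [Finset.sum_congr rfl fun t _ => this t, ← Finset.mul_sum, (hP x).2, mul_one]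
  rw [Finset.sum_congr rfl fun x _ => h2 x, hPX.2]

include hPX hPW hP in
lemma sum_pYA_eq_one : ∑ y, ∑ a, pYA PX PW P y a = 1 := by
  have h1 : ∀ y, ∑ a, pYA PX PW P y a = ∑ t, pYT PX PW P y t := by
    intro y
    rw [Finset.sum_congr rfl fun a _ => pYA_eq PX PW P y a]
    exact sum_fiber _
  rw [Finset.sum_congr rfl fun y _ => h1 y]
  exact sum_pYT_eq_one PX PW P hPX hPW hP

include hPX hPW hP in
lemma pYA_le_one (y a) : pYA PX PW P y a ≤ 1 := by
  have h0 : ∀ x t, 0 ≤ P x t := fun x t => (hP x).1 t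
  have hx : ∀ x, 0 ≤ PX x := hPX.1
  have hw : ∀ a x y, 0 ≤ PW a x y := fun a x y => (hPW a x).1 y
  calc pYA PX PW P y a ≤ ∑ a', pYA PX PW P y a' :=
        Finset.single_le_sum (fun a' _ => pYA_nonneg PX PW P hx hw h0 y a') (mem_univ a)
    _ ≤ ∑ y', ∑ a', pYA PX PW P y' a' :=
        Finset.single_le_sum
          (fun y' _ => Finset.sum_nonneg fun a' _ => pYA_nonneg PX PW P hx hw h0 y' a')
          (mem_univ y)
    _ = 1 := sum_pYA_eq_one PX PW P hPX hPW hP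

include hPX hPW hP in
lemma pYT_le_one (y t) : pYT PX PW P y t ≤ 1 := by
  have h0 : ∀ x t, 0 ≤ P x t := fun x t => (hP x).1 t
  have hx : ∀ x, 0 ≤ PX x := hPX.1
  have hw : ∀ a x y, 0 ≤ PW a x y := fun a x y => (hPW a x).1 y
  calc pYT PX PW P y t ≤ pYA PX PW P y t.2 := pYT_le_pYA PX PW P hx hw h0 y t
    _ ≤ 1 := pYA_le_one PX PW P hPX hPW hP y t.2

include hPX hP in
lemma pA_le_one (a) : pA PX P a ≤ 1 := by
  have h0 : ∀ x t, 0 ≤ P x t := fun x t => (hP x).1 t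
  have hx : ∀ x, 0 ≤ PX x := hPX.1
  calc pA PX P a ≤ ∑ a', pA PX P a' :=
        Finset.single_le_sum (fun a' _ => pA_nonneg PX P hx h0 a') (mem_univ a)
    _ = 1 := sum_pA_eq_one PX P hPX hP

include hPX hPW hP in
lemma pXYT_le_pA (x y t) : pXYT PX PW P x y t ≤ pA PX P t.2 := by
  have h0 : ∀ x t, 0 ≤ P x t := fun x t => (hP x).1 t
  have hx : ∀ x, 0 ≤ PX x := hPX.1
  have hw1 : PW t.2 x y ≤ 1 := by
    have := Finset.single_le_sum (f := fun y' => PW t.2 x y')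
      (fun y' _ => (hPW t.2 x).1 y') (mem_univ y)
    rw [(hPW t.2 x).2] at this
    exact this
  calc pXYT PX PW P x y t ≤ PX x * P x t := by
        unfold pXYT
        nlinarith [mul_nonneg (hx x) (h0 x t), (hPW t.2 x).1 y]
    _ ≤ pXA PX P x t.2 := entry_le_pXA PX P hx h0 x t
    _ ≤ pA PX P t.2 := pXA_le_pA PX P hx h0 x t.2

end mass

end RDCaux
namespace RDCaux
set_option linter.unusedSectionVars false

open Finset Real

variable {X Y A Xh : Type} [Fintype X] [Fintype Y] [Fintype A] [Fintype Xh]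
  [DecidableEq X] [DecidableEq Y] [DecidableEq A] [DecidableEq Xh]

lemma sum_lin {ι : Type*} [Fintype ι] (f g h : ι → ℝ) (l m : ℝ)
    (hfg : ∀ i, h i = l * f i + m * g i) :
    ∑ i, h i = l * (∑ i, f i) + m * (∑ i, g i) := by
  simp [hfg, Finset.sum_add_distrib, Finset.mul_sum]

variable (PX : X → ℝ) (PW : A → X → Y → ℝ)

section lin

variable (P1 P2 : X → Strat Y Xh A → ℝ) (l m : ℝ)

lemma pXYT_comb (x y t) :
    pXYT PX PW (fun x t => l * P1 x t + m * P2 x t) x y t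
      = l * pXYT PX PW P1 x y t + m * pXYT PX PW P2 x y t := by
  unfold pXYT; ring

lemma pA_comb (a : A) :
    pA PX (fun x t => l * P1 x t + m * P2 x t) a
      = l * pA PX P1 a + m * pA PX P2 a := by
  unfold pA
  refine sum_lin _ _ _ l m fun x => ?_
  refine sum_lin _ _ _ l m fun t => ?_
  by_cases h : t.2 = a <;> simp [h] <;> ring

lemma expDist_comb (dist : X → Xh → ℝ) :
    expDist PX PW dist (fun x t => l * P1 x t + m * P2 x t)
      = l * expDist PX PW dist P1 + m * expDist PX PW dist P2 := by
  unfold expDist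
  refine sum_lin _ _ _ l m fun x => ?_
  refine sum_lin _ _ _ l m fun y => ?_
  refine sum_lin _ _ _ l m fun t => ?_
  rw [pXYT_comb]; ring

lemma expCost_comb (cost : A → ℝ) :
    expCost PX cost (fun x t => l * P1 x t + m * P2 x t)
      = l * expCost PX cost P1 + m * expCost PX cost P2 := by
  unfold expCost
  refine sum_lin _ _ _ l m fun x => ?_
  refine sum_lin _ _ _ l m fun t => ?_
  ring

lemma IsCondPMF_comb (h1 : IsCondPMF P1) (h2 : IsCondPMF P2)
    (hl : 0 ≤ l) (hm : 0 ≤ m) (hlm : l + m = 1) :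
    IsCondPMF (fun x t => l * P1 x t + m * P2 x t) := by
  intro x
  constructor
  · intro t
    exact add_nonneg (mul_nonneg hl ((h1 x).1 t)) (mul_nonneg hm ((h2 x).1 t))
  · rw [sum_lin (P1 x) (P2 x) _ l m fun t => rfl, (h1 x).2, (h2 x).2]
    simpa using hlm

end lin

/-- The set of conditional pmfs. -/
def Kset (X Y A Xh : Type) [Fintype X] [Fintype Y] [Fintype A] [Fintype Xh] [DecidableEq Y] :
    Set (X → Strat Y Xh A → ℝ) := {P | IsCondPMF P}

lemma cont_eval (x : X) (t : Strat Y Xh A) :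
    Continuous fun P : X → Strat Y Xh A → ℝ => P x t :=
  (continuous_apply t).comp (continuous_apply x)

lemma isClosed_K : IsClosed (Kset X Y A Xh) := by
  have : Kset X Y A Xh =
      ⋂ x : X, ((⋂ t : Strat Y Xh A, {P : X → Strat Y Xh A → ℝ | 0 ≤ P x t}) ∩
        {P : X → Strat Y Xh A → ℝ | ∑ t, P x t = 1}) := by
    ext P
    simp only [Kset, Set.mem_setOf_eq, Set.mem_iInter, Set.mem_inter_iff, IsCondPMF, IsPMF]
    try tauto
  rw [this]
  refine isClosed_iInter fun x => IsClosed.inter ?_ ?_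
  · exact isClosed_iInter fun t => isClosed_le continuous_const (cont_eval x t)
  · exact isClosed_eq (continuous_finset_sum _ fun t _ => cont_eval x t) continuous_const

lemma isCompact_K : IsCompact (Kset X Y A Xh) := by
  have hbox : IsCompact (Set.pi Set.univ fun _ : X =>
      (Set.pi Set.univ fun _ : Strat Y Xh A => Set.Icc (0:ℝ) 1)) :=
    isCompact_univ_pi fun _ => isCompact_univ_pi fun _ => isCompact_Icc
  refine IsCompact.of_isClosed_subset hbox isClosed_K ?_
  intro P hP
  rw [Set.mem_univ_pi]
  intro x
  rw [Set.mem_univ_pi]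
  intro t
  constructor
  · exact (hP x).1 t
  · calc P x t ≤ ∑ t', P x t' :=
        Finset.single_le_sum (fun t' _ => (hP x).1 t') (mem_univ t)
      _ = 1 := (hP x).2

lemma nonempty_K [Nonempty Y] [Nonempty Xh] [Nonempty A] :
    (Kset X Y A Xh).Nonempty := by
  obtain ⟨t0⟩ : Nonempty (Strat Y Xh A) := inferInstance
  refine ⟨fun _ t => if t = t0 then 1 else 0, fun x => ⟨fun t => ?_, ?_⟩⟩
  · dsimp only
    split <;> norm_num
  · simp

lemma cont_ite (c : Prop) [Decidable c] {α : Type*} [TopologicalSpace α]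
    {f : α → ℝ} (hf : Continuous f) : Continuous fun p => if c then f p else 0 := by
  by_cases h : c
  · simpa [h] using hf
  · simp only [h, if_false]
    exact continuous_const

lemma cont_pXYT (x y t) : Continuous fun P : X → Strat Y Xh A → ℝ => pXYT PX PW P x y t := by
  unfold pXYT
  exact (continuous_const.mul (cont_eval x t)).mul continuous_const

lemma cont_pYT (y t) : Continuous fun P : X → Strat Y Xh A → ℝ => pYT PX PW P y t := by
  unfold pYT
  exact continuous_finset_sum _ fun x _ => cont_pXYT PX PW x y t

lemma cont_pXA (x a) : Continuous fun P : X → Strat Y Xh A → ℝ => pXA PX P x a := by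
  unfold pXA
  exact continuous_finset_sum _ fun t _ => cont_ite _ (continuous_const.mul (cont_eval x t))

lemma cont_pA (a) : Continuous fun P : X → Strat Y Xh A → ℝ => pA PX P a := by
  have : (fun P : X → Strat Y Xh A → ℝ => pA PX P a) = fun P => ∑ x, pXA PX P x a := rfl
  rw [this]
  exact continuous_finset_sum _ fun x _ => cont_pXA PX x a

lemma cont_pYA (y a) : Continuous fun P : X → Strat Y Xh A → ℝ => pYA PX PW P y a := by
  unfold pYA
  exact continuous_finset_sum _ fun x _ =>
    continuous_finset_sum _ fun t _ => cont_ite _ (cont_pXYT PX PW x y t)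

lemma cont_pT (t) : Continuous fun P : X → Strat Y Xh A → ℝ => pT PX P t := by
  unfold pT
  exact continuous_finset_sum _ fun x _ => continuous_const.mul (cont_eval x t)

lemma cont_expDist (dist : X → Xh → ℝ) : Continuous (expDist PX PW dist) := by
  unfold expDist
  refine continuous_finset_sum _ fun x _ => ?_
  refine continuous_finset_sum _ fun y _ => ?_
  refine continuous_finset_sum _ fun t _ => ?_
  exact (cont_pXYT PX PW x y t).mul continuous_const

lemma cont_expCost (cost : A → ℝ) :
    Continuous (expCost (X := X) (Y := Y) (A := A) (Xh := Xh) PX cost) := by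
  unfold expCost
  refine continuous_finset_sum _ fun x _ => ?_
  refine continuous_finset_sum _ fun t _ => ?_
  exact (continuous_const.mul (cont_eval x t)).mul continuous_const

lemma cont_rlogbr : Continuous fun r : ℝ => r * Real.logb 2 r := by
  have := Real.continuous_mul_log.div_const (Real.log 2)
  simpa [Real.logb, mul_div_assoc] using this

/-- Continuity of `(u,v) ↦ u * logb 2 v` on the region `0 ≤ u ≤ v ≤ 1`. -/
lemma contOn_mul_logb :
    ContinuousOn (fun p : ℝ × ℝ => p.1 * Real.logb 2 p.2)
      {p : ℝ × ℝ | 0 ≤ p.1 ∧ p.1 ≤ p.2 ∧ p.2 ≤ 1} := by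
  set D : Set (ℝ × ℝ) := {p : ℝ × ℝ | 0 ≤ p.1 ∧ p.1 ≤ p.2 ∧ p.2 ≤ 1} with hD
  intro p hp
  by_cases hv : p.2 = 0
  · have hp1 : p.1 = 0 := le_antisymm (hp.2.1.trans hv.le) hp.1
    rw [ContinuousWithinAt]
    have hval : p.1 * Real.logb 2 p.2 = 0 := by rw [hp1]; ring
    rw [hval]
    have hcont2 : Continuous fun q : ℝ × ℝ => q.2 * Real.logb 2 q.2 :=
      cont_rlogbr.comp continuous_snd
    have hlow : Filter.Tendsto (fun q : ℝ × ℝ => q.2 * Real.logb 2 q.2)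
        (nhdsWithin p D) (nhds 0) := by
      have := (hcont2.tendsto p).mono_left (nhdsWithin_le_nhds (s := D))
      simpa [hv] using this
    refine tendsto_of_tendsto_of_tendsto_of_le_of_le' hlow tendsto_const_nhds ?_ ?_
    · refine Filter.eventually_of_mem self_mem_nhdsWithin fun q hq => ?_
      rcases hq with ⟨hq1, hq2, hq3⟩
      have hlogb : Real.logb 2 q.2 ≤ 0 :=
        Real.logb_nonpos (by norm_num) (hq1.trans hq2) hq3
      exact mul_le_mul_of_nonpos_right hq2 hlogb
    · refine Filter.eventually_of_mem self_mem_nhdsWithin fun q hq => ?_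
      rcases hq with ⟨hq1, hq2, hq3⟩
      have hlogb : Real.logb 2 q.2 ≤ 0 :=
        Real.logb_nonpos (by norm_num) (hq1.trans hq2) hq3
      exact mul_nonpos_of_nonneg_of_nonpos hq1 hlogb
  · exact (continuous_fst.continuousAt.mul
      ((Real.continuousAt_logb hv).comp continuous_snd.continuousAt)).continuousWithinAt

/-- The `F` functional in a convenient form. -/
def Fself (PX : X → ℝ) (PW : A → X → Y → ℝ) (P : X → Strat Y Xh A → ℝ) : ℝ :=
  ∑ x, ∑ y, ∑ t, pXYT PX PW P x y t *
    Real.logb 2 (P x t * pYA PX PW P y t.2 / (pYT PX PW P y t * pA PX P t.2))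

/-- Decomposed version of `Fself`, convenient for continuity. -/
def F4 (PX : X → ℝ) (PW : A → X → Y → ℝ) (P : X → Strat Y Xh A → ℝ) : ℝ :=
  ∑ x, ∑ y, ∑ t,
    ((PX x * PW t.2 x y) * (P x t * Real.logb 2 (P x t))
      + pXYT PX PW P x y t * Real.logb 2 (pYA PX PW P y t.2)
      - pXYT PX PW P x y t * Real.logb 2 (pYT PX PW P y t)
      - pXYT PX PW P x y t * Real.logb 2 (pA PX P t.2))

lemma contOn_F4 (hPX : IsPMF PX) (hPW : ∀ a x, IsPMF (PW a x)) :
    ContinuousOn (F4 PX PW) (Kset X Y A Xh) := by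
  unfold F4
  refine continuousOn_finset_sum _ fun x _ => continuousOn_finset_sum _ fun y _ =>
    continuousOn_finset_sum _ fun t _ => ?_
  have hD : ContinuousOn (fun p : ℝ × ℝ => p.1 * Real.logb 2 p.2)
      {p : ℝ × ℝ | 0 ≤ p.1 ∧ p.1 ≤ p.2 ∧ p.2 ≤ 1} := contOn_mul_logb
  have basics : ∀ P ∈ Kset X Y A Xh, (∀ x, 0 ≤ PX x) ∧ (∀ a x y, 0 ≤ PW a x y)
      ∧ (∀ x t, 0 ≤ P x t) := by
    intro P hP
    exact ⟨hPX.1, fun a x y => (hPW a x).1 y, fun x t => (hP x).1 t⟩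
  have t1 : ContinuousOn (fun P : X → Strat Y Xh A → ℝ =>
      (PX x * PW t.2 x y) * (P x t * Real.logb 2 (P x t))) (Kset X Y A Xh) :=
    (continuous_const.mul (cont_rlogbr.comp (cont_eval x t))).continuousOn
  have t2 : ContinuousOn (fun P : X → Strat Y Xh A → ℝ =>
      pXYT PX PW P x y t * Real.logb 2 (pYA PX PW P y t.2)) (Kset X Y A Xh) := by
    refine hD.comp (((cont_pXYT PX PW x y t).prodMk (cont_pYA PX PW y t.2)).continuousOn) ?_
    intro P hP
    obtain ⟨hx, hw, hp⟩ := basics P hP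
    refine ⟨pXYT_nonneg PX PW P hx hw hp x y t, ?_, pYA_le_one PX PW P hPX hPW hP y t.2⟩
    exact (pXYT_le_pYT PX PW P hx hw hp x y t).trans (pYT_le_pYA PX PW P hx hw hp y t)
  have t3 : ContinuousOn (fun P : X → Strat Y Xh A → ℝ =>
      pXYT PX PW P x y t * Real.logb 2 (pYT PX PW P y t)) (Kset X Y A Xh) := by
    refine hD.comp (((cont_pXYT PX PW x y t).prodMk (cont_pYT PX PW y t)).continuousOn) ?_
    intro P hP
    obtain ⟨hx, hw, hp⟩ := basics P hP
    exact ⟨pXYT_nonneg PX PW P hx hw hp x y t, pXYT_le_pYT PX PW P hx hw hp x y t,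
      pYT_le_one PX PW P hPX hPW hP y t⟩
  have t4 : ContinuousOn (fun P : X → Strat Y Xh A → ℝ =>
      pXYT PX PW P x y t * Real.logb 2 (pA PX P t.2)) (Kset X Y A Xh) := by
    refine hD.comp (((cont_pXYT PX PW x y t).prodMk (cont_pA PX t.2)).continuousOn) ?_
    intro P hP
    obtain ⟨hx, hw, hp⟩ := basics P hP
    exact ⟨pXYT_nonneg PX PW P hx hw hp x y t, pXYT_le_pA PX PW P hPX hPW hP x y t,
      pA_le_one PX P hPX hP t.2⟩
  exact ((t1.add t2).sub t3).sub t4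

end RDCaux
namespace RDCaux
set_option linter.unusedSectionVars false
set_option maxHeartbeats 1000000

open Finset Real

variable {X Y A Xh : Type} [Fintype X] [Fintype Y] [Fintype A] [Fintype Xh]
  [DecidableEq X] [DecidableEq Y] [DecidableEq A] [DecidableEq Xh]

variable (PX : X → ℝ) (PW : A → X → Y → ℝ) (P : X → Strat Y Xh A → ℝ)

section cascade

variable (hPXpos : ∀ x, 0 < PX x) (hPW0 : ∀ a x y, 0 ≤ PW a x y) (hP0 : ∀ x t, 0 ≤ P x t)

include hPXpos hPW0 hP0 in
lemma pos_cascade {x y t} (h : 0 < pXYT PX PW P x y t) :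
    0 < P x t ∧ 0 < PW t.2 x y ∧ 0 < pXA PX P x t.2 ∧ 0 < pA PX P t.2 ∧
      0 < pYT PX PW P y t ∧ 0 < pYA PX PW P y t.2 ∧ 0 < pXYA PX PW P x y t.2 := by
  have hx : ∀ x, 0 ≤ PX x := fun x => (hPXpos x).le
  have hPt : 0 < P x t := by
    rcases (hP0 x t).lt_or_eq with h' | h'
    · exact h'
    · exfalso
      have : pXYT PX PW P x y t = 0 := by unfold pXYT; rw [← h']; ring
      rw [this] at h
      exact lt_irrefl 0 h
  have hW : 0 < PW t.2 x y := by
    rcases (hPW0 t.2 x y).lt_or_eq with h' | h'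
    · exact h'
    · exfalso
      have : pXYT PX PW P x y t = 0 := by unfold pXYT; rw [← h']; ring
      rw [this] at h
      exact lt_irrefl 0 h
  have hXA : 0 < pXA PX P x t.2 :=
    lt_of_lt_of_le (mul_pos (hPXpos x) hPt) (entry_le_pXA PX P hx hP0 x t)
  have hA : 0 < pA PX P t.2 := lt_of_lt_of_le hXA (pXA_le_pA PX P hx hP0 x t.2)
  have hYT : 0 < pYT PX PW P y t :=
    lt_of_lt_of_le h (pXYT_le_pYT PX PW P hx hPW0 hP0 x y t)
  have hYA : 0 < pYA PX PW P y t.2 :=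
    lt_of_lt_of_le hYT (pYT_le_pYA PX PW P hx hPW0 hP0 y t)
  have hXYA : 0 < pXYA PX PW P x y t.2 := by
    rw [pXYA_eq]
    exact mul_pos hXA hW
  exact ⟨hPt, hW, hXA, hA, hYT, hYA, hXYA⟩

end cascade

lemma IXA_eq (hPW : ∀ a x, IsPMF (PW a x)) :
    IXA PX P = ∑ x, ∑ y, ∑ t, pXYT PX PW P x y t *
      Real.logb 2 (pXA PX P x t.2 / (PX x * pA PX P t.2)) := by
  have step1 : IXA PX P = ∑ x, ∑ t, (PX x * P x t) *
      Real.logb 2 (pXA PX P x t.2 / (PX x * pA PX P t.2)) := by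
    refine Finset.sum_congr rfl fun x _ => ?_
    have := sum_fiber_mul (fun t : Strat Y Xh A => PX x * P x t)
      (fun a => Real.logb 2 (pXA PX P x a / (PX x * pA PX P a)))
    exact this
  rw [step1]
  refine Finset.sum_congr rfl fun x _ => ?_
  calc ∑ t, (PX x * P x t) * Real.logb 2 (pXA PX P x t.2 / (PX x * pA PX P t.2))
      = ∑ t, ∑ y, pXYT PX PW P x y t *
          Real.logb 2 (pXA PX P x t.2 / (PX x * pA PX P t.2)) := by
        refine Finset.sum_congr rfl fun t _ => ?_
        rw [← Finset.sum_mul, sum_y_pXYT PX PW P hPW x t]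
    _ = ∑ y, ∑ t, pXYT PX PW P x y t *
          Real.logb 2 (pXA PX P x t.2 / (PX x * pA PX P t.2)) := Finset.sum_comm

lemma Ffun_eq_Fself (hPX : IsPMF PX) (hPXpos : ∀ x, 0 < PX x)
    (hPW : ∀ a x, IsPMF (PW a x)) (hP : IsCondPMF P) :
    IXA PX P + IXTcondYA PX PW P = Fself PX PW P := by
  have hPW0 : ∀ a x y, 0 ≤ PW a x y := fun a x y => (hPW a x).1 y
  have hP0 : ∀ x t, 0 ≤ P x t := fun x t => (hP x).1 t
  have hx : ∀ x, 0 ≤ PX x := hPX.1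
  rw [IXA_eq PX PW P hPW]
  unfold IXTcondYA Fself
  rw [← Finset.sum_add_distrib]
  refine Finset.sum_congr rfl fun x _ => ?_
  rw [← Finset.sum_add_distrib]
  refine Finset.sum_congr rfl fun y _ => ?_
  rw [← Finset.sum_add_distrib]
  refine Finset.sum_congr rfl fun t _ => ?_
  rcases (pXYT_nonneg PX PW P hx hPW0 hP0 x y t).lt_or_eq with h | h
  · obtain ⟨hPt, hW, hXA, hA, hYT, hYA, hXYA⟩ := pos_cascade PX PW P hPXpos hPW0 hP0 h
    have harg : (pXA PX P x t.2 / (PX x * pA PX P t.2)) *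
        (pXYT PX PW P x y t * pYA PX PW P y t.2 / (pXYA PX PW P x y t.2 * pYT PX PW P y t))
        = P x t * pYA PX PW P y t.2 / (pYT PX PW P y t * pA PX P t.2) := by
      have hp3 : pXYT PX PW P x y t = PX x * P x t * PW t.2 x y := rfl
      rw [pXYA_eq, hp3]
      field_simp [hXA.ne', (hPXpos x).ne', hW.ne', hYT.ne', hA.ne']
    have e1 : 0 < pXA PX P x t.2 / (PX x * pA PX P t.2) :=
      div_pos hXA (mul_pos (hPXpos x) hA)
    have e2 : 0 < pXYT PX PW P x y t * pYA PX PW P y t.2 /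
        (pXYA PX PW P x y t.2 * pYT PX PW P y t) :=
      div_pos (mul_pos h hYA) (mul_pos hXYA hYT)
    rw [← mul_add, ← Real.logb_mul e1.ne' e2.ne', harg]
  · rw [← h]
    ring
  -- note: goal shape is `p3 * logb r1 + p3 * logb r2 = p3 * logb r3`

lemma Fself_eq_F4 (hPX : IsPMF PX) (hPXpos : ∀ x, 0 < PX x)
    (hPW : ∀ a x, IsPMF (PW a x)) (hP : IsCondPMF P) :
    Fself PX PW P = F4 PX PW P := by
  have hPW0 : ∀ a x y, 0 ≤ PW a x y := fun a x y => (hPW a x).1 y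
  have hP0 : ∀ x t, 0 ≤ P x t := fun x t => (hP x).1 t
  have hx : ∀ x, 0 ≤ PX x := hPX.1
  unfold Fself F4
  refine Finset.sum_congr rfl fun x _ => Finset.sum_congr rfl fun y _ =>
    Finset.sum_congr rfl fun t _ => ?_
  rcases (pXYT_nonneg PX PW P hx hPW0 hP0 x y t).lt_or_eq with h | h
  · obtain ⟨hPt, hW, hXA, hA, hYT, hYA, hXYA⟩ := pos_cascade PX PW P hPXpos hPW0 hP0 h
    have hp3 : pXYT PX PW P x y t = PX x * P x t * PW t.2 x y := rfl
    have hexp : Real.logb 2 (P x t * pYA PX PW P y t.2 / (pYT PX PW P y t * pA PX P t.2))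
        = Real.logb 2 (P x t) + Real.logb 2 (pYA PX PW P y t.2)
          - Real.logb 2 (pYT PX PW P y t) - Real.logb 2 (pA PX P t.2) := by
      rw [Real.logb_div (mul_pos hPt hYA).ne' (mul_pos hYT hA).ne',
        Real.logb_mul hPt.ne' hYA.ne', Real.logb_mul hYT.ne' hA.ne']
      ring
    rw [hexp, hp3]
    ring
  · have h0 : PX x * P x t * PW t.2 x y = 0 := h.symm
    rcases mul_eq_zero.mp h0 with h1 | h1
    · rcases mul_eq_zero.mp h1 with h2 | h2
      · exact absurd h2 (hPXpos x).ne'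
      · rw [← h, h2]
        simp
    · rw [← h, h1]
      simp

lemma contOn_Ffun (hPX : IsPMF PX) (hPXpos : ∀ x, 0 < PX x) (hPW : ∀ a x, IsPMF (PW a x)) :
    ContinuousOn (fun P : X → Strat Y Xh A → ℝ => IXA PX P + IXTcondYA PX PW P)
      (Kset X Y A Xh) := by
  refine (contOn_F4 PX PW hPX hPW).congr fun P hP => ?_
  rw [Ffun_eq_Fself PX PW P hPX hPXpos hPW hP, Fself_eq_F4 PX PW P hPX hPXpos hPW hP]

/-- Two-point log-sum inequality. -/
lemma LSI2 {l m u1 u2 v1 v2 : ℝ} (hl : 0 < l) (hm : 0 < m)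
    (hu1 : 0 ≤ u1) (hu2 : 0 ≤ u2) (hv1 : 0 ≤ v1) (hv2 : 0 ≤ v2)
    (h1 : 0 < u1 → 0 < v1) (h2 : 0 < u2 → 0 < v2) :
    (l * u1 + m * u2) * Real.logb 2 ((l * u1 + m * u2) / (l * v1 + m * v2))
      ≤ l * (u1 * Real.logb 2 (u1 / v1)) + m * (u2 * Real.logb 2 (u2 / v2)) := by
  rcases hu1.lt_or_eq with hu1' | hu1' <;> rcases hu2.lt_or_eq with hu2' | hu2'
  · -- both positive
    have hv1' := h1 hu1'
    have hv2' := h2 hu2'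
    set U := l * u1 + m * u2 with hU
    set V := l * v1 + m * v2 with hV
    have hUpos : 0 < U := by positivity
    have hVpos : 0 < V := by positivity
    have key : ∀ u v : ℝ, 0 < u → 0 < v →
        u * Real.log (U / V) + u - v * (U / V) ≤ u * Real.log (u / v) := by
      intro u v hu hv
      have hratio : 0 < u * V / (v * U) := by positivity
      have hlog := Real.one_sub_inv_le_log_of_pos hratio
      have hsplit : Real.log (u * V / (v * U)) = Real.log (u / v) - Real.log (U / V) := by
        rw [Real.log_div (by positivity : (0:ℝ) < u * V).ne'
            (by positivity : (0:ℝ) < v * U).ne',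
          Real.log_mul hu.ne' hVpos.ne', Real.log_mul hv.ne' hUpos.ne',
          Real.log_div hu.ne' hv.ne', Real.log_div hUpos.ne' hVpos.ne']
        ring
      have hinvval : (u * V / (v * U))⁻¹ = v * U / (u * V) := by
        rw [inv_div]
      rw [hsplit, hinvval] at hlog
      have hmul := mul_le_mul_of_nonneg_left hlog hu.le
      have hid : u * (1 - v * U / (u * V)) = u - v * (U / V) := by
        field_simp
      rw [hid] at hmul
      linarith [hmul, mul_le_mul_of_nonneg_left (le_refl (Real.log (u / v))) hu.le]
    have k1 := key u1 v1 hu1' hv1'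
    have k2 := key u2 v2 hu2' hv2'
    have hVU : V * (U / V) = U := by field_simp
    have hmain : U * Real.log (U / V) ≤
        l * (u1 * Real.log (u1 / v1)) + m * (u2 * Real.log (u2 / v2)) := by
      have c1 := mul_le_mul_of_nonneg_left k1 hl.le
      have c2 := mul_le_mul_of_nonneg_left k2 hm.le
      have expand : U * Real.log (U / V)
          = l * (u1 * Real.log (U / V) + u1 - v1 * (U / V))
            + m * (u2 * Real.log (U / V) + u2 - v2 * (U / V)) := by
        linear_combination hVU
      rw [expand]
      exact add_le_add c1 c2
    have hlog2 : (0:ℝ) < Real.log 2 := Real.log_pos one_lt_two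
    simp only [Real.logb]
    calc U * (Real.log (U / V) / Real.log 2) = (U * Real.log (U / V)) / Real.log 2 := by ring
      _ ≤ (l * (u1 * Real.log (u1 / v1)) + m * (u2 * Real.log (u2 / v2))) / Real.log 2 :=
          (div_le_div_iff_of_pos_right hlog2).mpr hmain
      _ = l * (u1 * (Real.log (u1 / v1) / Real.log 2))
            + m * (u2 * (Real.log (u2 / v2) / Real.log 2)) := by ring
  · -- u1 > 0, u2 = 0
    have hv1' := h1 hu1'
    rw [← hu2']
    have hle : (l * u1 + m * 0) / (l * v1 + m * v2) ≤ u1 / v1 := by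
      rw [mul_zero, add_zero, div_le_div_iff₀ (by positivity) hv1']
      nlinarith [mul_nonneg (mul_nonneg hm.le hu1) hv2]
    have hpos : 0 < (l * u1 + m * 0) / (l * v1 + m * v2) := by
      rw [mul_zero, add_zero]
      positivity
    have hlogle := Real.logb_le_logb_of_le one_lt_two hpos hle
    have hnn : 0 ≤ l * u1 + m * 0 := by nlinarith
    calc (l * u1 + m * 0) * Real.logb 2 ((l * u1 + m * 0) / (l * v1 + m * v2))
        ≤ (l * u1 + m * 0) * Real.logb 2 (u1 / v1) :=
          mul_le_mul_of_nonneg_left hlogle hnn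
      _ = l * (u1 * Real.logb 2 (u1 / v1)) + m * (0 * Real.logb 2 (0 / v2)) := by ring
  · -- u1 = 0, u2 > 0
    have hv2' := h2 hu2'
    rw [← hu1']
    have hle : (l * 0 + m * u2) / (l * v1 + m * v2) ≤ u2 / v2 := by
      rw [mul_zero, zero_add, div_le_div_iff₀ (by positivity) hv2']
      nlinarith [mul_nonneg (mul_nonneg hl.le hu2) hv1]
    have hpos : 0 < (l * 0 + m * u2) / (l * v1 + m * v2) := by
      rw [mul_zero, zero_add]
      positivity
    have hlogle := Real.logb_le_logb_of_le one_lt_two hpos hle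
    have hnn : 0 ≤ l * 0 + m * u2 := by nlinarith
    calc (l * 0 + m * u2) * Real.logb 2 ((l * 0 + m * u2) / (l * v1 + m * v2))
        ≤ (l * 0 + m * u2) * Real.logb 2 (u2 / v2) :=
          mul_le_mul_of_nonneg_left hlogle hnn
      _ = l * (0 * Real.logb 2 (0 / v1)) + m * (u2 * Real.logb 2 (u2 / v2)) := by ring
  · rw [← hu1', ← hu2']
    simp

end RDCaux
namespace RDCaux
set_option linter.unusedSectionVars false
set_option maxHeartbeats 1000000

open Finset Real

variable {X Y A Xh : Type} [Fintype X] [Fintype Y] [Fintype A] [Fintype Xh]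
  [DecidableEq X] [DecidableEq Y] [DecidableEq A] [DecidableEq Xh]

variable (PX : X → ℝ) (PW : A → X → Y → ℝ)

/-- The auxiliary functional `Φ(P,q) = ∑ p(x,y,t) logb (P(t|x)/q_y(t))`. -/
def Phi (P : X → Strat Y Xh A → ℝ) (q : Y → Strat Y Xh A → ℝ) : ℝ :=
  ∑ x, ∑ y, ∑ t, pXYT PX PW P x y t * Real.logb 2 (P x t / q y t)

/-- The optimal `q` for a given `P`. -/
def wfun (P : X → Strat Y Xh A → ℝ) (y : Y) (t : Strat Y Xh A) : ℝ :=
  if 0 < pYA PX PW P y t.2 then pA PX P t.2 * pYT PX PW P y t / pYA PX PW P y t.2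
  else pT PX P t

section wprops

variable (P : X → Strat Y Xh A → ℝ)
variable (hPX : IsPMF PX) (hPXpos : ∀ x, 0 < PX x) (hPW : ∀ a x, IsPMF (PW a x))
  (hP : IsCondPMF P)

include hPX hPW hP in
lemma wfun_nonneg (y t) : 0 ≤ wfun PX PW P y t := by
  have hx : ∀ x, 0 ≤ PX x := hPX.1
  have hp0 : ∀ x t, 0 ≤ P x t := fun x t => (hP x).1 t
  have hw0 : ∀ a x y, 0 ≤ PW a x y := fun a x y => (hPW a x).1 y
  unfold wfun
  by_cases h : 0 < pYA PX PW P y t.2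
  · rw [if_pos h]
    exact div_nonneg (mul_nonneg (pA_nonneg PX P hx hp0 t.2)
      (pYT_nonneg PX PW P hx hw0 hp0 y t)) (le_of_lt h)
  · rw [if_neg h]
    exact pT_nonneg PX P hx hp0 t

include hPXpos hPW hP in
lemma wfun_pos {x y t} (h : 0 < pXYT PX PW P x y t) : 0 < wfun PX PW P y t := by
  have hp0 : ∀ x t, 0 ≤ P x t := fun x t => (hP x).1 t
  have hw0 : ∀ a x y, 0 ≤ PW a x y := fun a x y => (hPW a x).1 y
  obtain ⟨hPt, hW, hXA, hA, hYT, hYA, hXYA⟩ := pos_cascade PX PW P hPXpos hw0 hp0 h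
  unfold wfun
  rw [if_pos hYA]
  exact div_pos (mul_pos hA hYT) hYA

include hPX hPW hP in
lemma sum_fiber_wfun (y a) :
    ∑ t, (if t.2 = a then wfun PX PW P y t else 0) = pA PX P a := by
  have hx : ∀ x, 0 ≤ PX x := hPX.1
  have hp0 : ∀ x t, 0 ≤ P x t := fun x t => (hP x).1 t
  have hw0 : ∀ a x y, 0 ≤ PW a x y := fun a x y => (hPW a x).1 y
  by_cases hya : 0 < pYA PX PW P y a
  · have step : ∀ t : Strat Y Xh A, (if t.2 = a then wfun PX PW P y t else 0)
        = (if t.2 = a then pYT PX PW P y t else 0) * (pA PX P a / pYA PX PW P y a) := by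
      intro t
      by_cases h : t.2 = a
      · rw [if_pos h, if_pos h]
        unfold wfun
        rw [h, if_pos hya]
        ring
      · rw [if_neg h, if_neg h, zero_mul]
    rw [Finset.sum_congr rfl fun t _ => step t, ← Finset.sum_mul, ← pYA_eq]
    field_simp
  · have step : ∀ t : Strat Y Xh A, (if t.2 = a then wfun PX PW P y t else 0)
        = (if t.2 = a then pT PX P t else 0) := by
      intro t
      by_cases h : t.2 = a
      · rw [if_pos h, if_pos h]
        unfold wfun
        rw [h, if_neg hya]
      · rw [if_neg h, if_neg h]
    rw [Finset.sum_congr rfl fun t _ => step t, ← pA_eq_fiber_pT]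

include hPX hPXpos hPW hP in
lemma Ffun_eq_Phi_wfun :
    IXA PX P + IXTcondYA PX PW P = Phi PX PW P (wfun PX PW P) := by
  have hx : ∀ x, 0 ≤ PX x := hPX.1
  have hp0 : ∀ x t, 0 ≤ P x t := fun x t => (hP x).1 t
  have hw0 : ∀ a x y, 0 ≤ PW a x y := fun a x y => (hPW a x).1 y
  rw [Ffun_eq_Fself PX PW P hPX hPXpos hPW hP]
  unfold Fself Phi
  refine Finset.sum_congr rfl fun x _ => Finset.sum_congr rfl fun y _ =>
    Finset.sum_congr rfl fun t _ => ?_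
  rcases (pXYT_nonneg PX PW P hx hw0 hp0 x y t).lt_or_eq with h | h
  · obtain ⟨hPt, hW, hXA, hA, hYT, hYA, hXYA⟩ := pos_cascade PX PW P hPXpos hw0 hp0 h
    have hwv : wfun PX PW P y t = pA PX P t.2 * pYT PX PW P y t / pYA PX PW P y t.2 := by
      unfold wfun
      rw [if_pos hYA]
    have harg : P x t * pYA PX PW P y t.2 / (pYT PX PW P y t * pA PX P t.2)
        = P x t / (pA PX P t.2 * pYT PX PW P y t / pYA PX PW P y t.2) := by
      field_simp
    rw [hwv, harg]
  · rw [← h]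
    ring

include hPX hPXpos hPW hP in
lemma Phi_wfun_le (q : Y → Strat Y Xh A → ℝ) (hq0 : ∀ y t, 0 ≤ q y t)
    (hqm : ∀ y a, ∑ t, (if t.2 = a then q y t else 0) = pA PX P a)
    (hqpos : ∀ x y t, 0 < pXYT PX PW P x y t → 0 < q y t) :
    Phi PX PW P (wfun PX PW P) ≤ Phi PX PW P q := by
  have hx : ∀ x, 0 ≤ PX x := hPX.1
  have hp0 : ∀ x t, 0 ≤ P x t := fun x t => (hP x).1 t
  have hw0 : ∀ a x y, 0 ≤ PW a x y := fun a x y => (hPW a x).1 y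
  have hlog2 : (0:ℝ) < Real.log 2 := Real.log_pos one_lt_two
  have hdiff : Phi PX PW P q - Phi PX PW P (wfun PX PW P)
      = ∑ y, ∑ t, pYT PX PW P y t *
          (Real.logb 2 (wfun PX PW P y t) - Real.logb 2 (q y t)) := by
    unfold Phi
    rw [← Finset.sum_sub_distrib]
    have hx_side : ∀ x, (∑ y, ∑ t, pXYT PX PW P x y t * Real.logb 2 (P x t / q y t))
        - (∑ y, ∑ t, pXYT PX PW P x y t * Real.logb 2 (P x t / wfun PX PW P y t))
        = ∑ y, ∑ t, pXYT PX PW P x y t *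
            (Real.logb 2 (wfun PX PW P y t) - Real.logb 2 (q y t)) := by
      intro x
      rw [← Finset.sum_sub_distrib]
      refine Finset.sum_congr rfl fun y _ => ?_
      rw [← Finset.sum_sub_distrib]
      refine Finset.sum_congr rfl fun t _ => ?_
      rcases (pXYT_nonneg PX PW P hx hw0 hp0 x y t).lt_or_eq with h | h
      · obtain ⟨hPt, hW, hXA, hA, hYT, hYA, hXYA⟩ := pos_cascade PX PW P hPXpos hw0 hp0 h
        have hqp := hqpos x y t h
        have hwp := wfun_pos PX PW P hPXpos hPW hP h
        rw [Real.logb_div hPt.ne' hqp.ne', Real.logb_div hPt.ne' hwp.ne']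
        ring
      · rw [← h]
        ring
    rw [Finset.sum_congr rfl fun x _ => hx_side x]
    rw [Finset.sum_comm]
    refine Finset.sum_congr rfl fun y _ => ?_
    rw [Finset.sum_comm]
    refine Finset.sum_congr rfl fun t _ => ?_
    rw [← Finset.sum_mul]
    rfl
  have hterm : ∀ y t, (1 / Real.log 2) *
      (pYT PX PW P y t - q y t * pYA PX PW P y t.2 / pA PX P t.2)
      ≤ pYT PX PW P y t * (Real.logb 2 (wfun PX PW P y t) - Real.logb 2 (q y t)) := by
    intro y t
    rcases (pYT_nonneg PX PW P hx hw0 hp0 y t).lt_or_eq with hyt | hyt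
    · obtain ⟨x, hx3⟩ : ∃ x, 0 < pXYT PX PW P x y t := by
        by_contra hc
        push_neg at hc
        have hle : pYT PX PW P y t ≤ 0 := by
          unfold pYT
          exact Finset.sum_nonpos fun x _ => hc x
        linarith
      obtain ⟨hPt, hW, hXA, hA, hYT', hYA, hXYA⟩ := pos_cascade PX PW P hPXpos hw0 hp0 hx3
      have hqp := hqpos x y t hx3
      have hwv : wfun PX PW P y t = pA PX P t.2 * pYT PX PW P y t / pYA PX PW P y t.2 := by
        unfold wfun
        rw [if_pos hYA]
      have hwp : 0 < wfun PX PW P y t := by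
        rw [hwv]
        exact div_pos (mul_pos hA hyt) hYA
      have e2 : Real.log (q y t / wfun PX PW P y t) ≤ q y t / wfun PX PW P y t - 1 :=
        Real.log_le_sub_one_of_pos (div_pos hqp hwp)
      have e2' : Real.log (q y t) - Real.log (wfun PX PW P y t)
          ≤ q y t / wfun PX PW P y t - 1 := by
        rwa [Real.log_div hqp.ne' hwp.ne'] at e2
      have e3 : pYT PX PW P y t * (1 - q y t / wfun PX PW P y t)
          ≤ pYT PX PW P y t * (Real.log (wfun PX PW P y t) - Real.log (q y t)) :=
        mul_le_mul_of_nonneg_left (by linarith) hyt.le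
      have e4 : pYT PX PW P y t * (1 - q y t / wfun PX PW P y t)
          = pYT PX PW P y t - q y t * pYA PX PW P y t.2 / pA PX P t.2 := by
        rw [hwv]
        field_simp
      calc (1 / Real.log 2) *
          (pYT PX PW P y t - q y t * pYA PX PW P y t.2 / pA PX P t.2)
          = (1 / Real.log 2) * (pYT PX PW P y t * (1 - q y t / wfun PX PW P y t)) := by
            rw [e4]
        _ ≤ (1 / Real.log 2) *
            (pYT PX PW P y t * (Real.log (wfun PX PW P y t) - Real.log (q y t))) := by
            apply mul_le_mul_of_nonneg_left e3
            positivity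
        _ = pYT PX PW P y t *
            (Real.logb 2 (wfun PX PW P y t) - Real.logb 2 (q y t)) := by
            simp only [Real.logb]
            ring
    · rw [← hyt]
      have h1 : 0 ≤ q y t * pYA PX PW P y t.2 / pA PX P t.2 :=
        div_nonneg (mul_nonneg (hq0 y t) (pYA_nonneg PX PW P hx hw0 hp0 y t.2))
          (pA_nonneg PX P hx hp0 t.2)
      have h2 : (0:ℝ) ≤ 1 / Real.log 2 := by positivity
      nlinarith
  have hS : ∑ y, ∑ t, q y t * pYA PX PW P y t.2 / pA PX P t.2 ≤ 1 := by
    calc ∑ y, ∑ t, q y t * pYA PX PW P y t.2 / pA PX P t.2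
        = ∑ y, ∑ a, pA PX P a * (pYA PX PW P y a / pA PX P a) := by
          refine Finset.sum_congr rfl fun y _ => ?_
          rw [Finset.sum_congr rfl fun t (_ : t ∈ (univ : Finset (Strat Y Xh A))) =>
            mul_div_assoc (q y t) (pYA PX PW P y t.2) (pA PX P t.2),
            ← sum_fiber_mul (fun t => q y t) (fun a => pYA PX PW P y a / pA PX P a)]
          refine Finset.sum_congr rfl fun a _ => ?_
          rw [hqm y a]
      _ ≤ ∑ y, ∑ a, pYA PX PW P y a := by
          refine Finset.sum_le_sum fun y _ => Finset.sum_le_sum fun a _ => ?_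
          rcases (pA_nonneg PX P hx hp0 a).lt_or_eq with ha | ha
          · rw [mul_comm, div_mul_cancel₀ _ ha.ne']
          · rw [← ha]
            simpa using pYA_nonneg PX PW P hx hw0 hp0 y a
      _ = 1 := sum_pYA_eq_one PX PW P hPX hPW hP
  have hsum : (1 / Real.log 2) *
      ((∑ y, ∑ t, pYT PX PW P y t) - ∑ y, ∑ t, q y t * pYA PX PW P y t.2 / pA PX P t.2)
      ≤ Phi PX PW P q - Phi PX PW P (wfun PX PW P) := by
    rw [hdiff]
    have hsums := Finset.sum_le_sum fun y (_ : y ∈ (univ : Finset Y)) =>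
      Finset.sum_le_sum fun t (_ : t ∈ (univ : Finset (Strat Y Xh A))) => hterm y t
    calc (1 / Real.log 2) *
        ((∑ y, ∑ t, pYT PX PW P y t) - ∑ y, ∑ t, q y t * pYA PX PW P y t.2 / pA PX P t.2)
        = ∑ y, ∑ t, (1 / Real.log 2) *
            (pYT PX PW P y t - q y t * pYA PX PW P y t.2 / pA PX P t.2) := by
          simp [Finset.mul_sum, Finset.sum_sub_distrib, mul_sub]
      _ ≤ ∑ y, ∑ t, pYT PX PW P y t *
            (Real.logb 2 (wfun PX PW P y t) - Real.logb 2 (q y t)) := hsums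
  have hone : ∑ y, ∑ t, pYT PX PW P y t = 1 := sum_pYT_eq_one PX PW P hPX hPW hP
  rw [hone] at hsum
  have hfin : 0 ≤ Phi PX PW P q - Phi PX PW P (wfun PX PW P) := by
    refine le_trans ?_ hsum
    have h2 : (0:ℝ) ≤ 1 / Real.log 2 := by positivity
    nlinarith [hS]
  linarith

end wprops

end RDCaux
namespace RDCaux
set_option linter.unusedSectionVars false
set_option maxHeartbeats 1000000

open Finset Real

variable {X Y A Xh : Type} [Fintype X] [Fintype Y] [Fintype A] [Fintype Xh]
  [DecidableEq X] [DecidableEq Y] [DecidableEq A] [DecidableEq Xh]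

variable (PX : X → ℝ) (PW : A → X → Y → ℝ)

lemma Ffun_convex (hPX : IsPMF PX) (hPXpos : ∀ x, 0 < PX x) (hPW : ∀ a x, IsPMF (PW a x))
    (P1 P2 : X → Strat Y Xh A → ℝ) (hP1 : IsCondPMF P1) (hP2 : IsCondPMF P2)
    {l m : ℝ} (hl : 0 ≤ l) (hm : 0 ≤ m) (hlm : l + m = 1) :
    IXA PX (fun x t => l * P1 x t + m * P2 x t)
      + IXTcondYA PX PW (fun x t => l * P1 x t + m * P2 x t)
    ≤ l * (IXA PX P1 + IXTcondYA PX PW P1) + m * (IXA PX P2 + IXTcondYA PX PW P2) := by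
  rcases hl.lt_or_eq with hl' | hl'
  rcases hm.lt_or_eq with hm' | hm'
  · -- 0 < l, 0 < m
    have hPc : IsCondPMF (fun x t => l * P1 x t + m * P2 x t) :=
      IsCondPMF_comb P1 P2 l m hP1 hP2 hl hm hlm
    have hq0 : ∀ y t, 0 ≤ l * wfun PX PW P1 y t + m * wfun PX PW P2 y t := by
      intro y t
      exact add_nonneg (mul_nonneg hl (wfun_nonneg PX PW P1 hPX hPW hP1 y t))
        (mul_nonneg hm (wfun_nonneg PX PW P2 hPX hPW hP2 y t))
    have hqm : ∀ y a, ∑ t, (if t.2 = a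
          then l * wfun PX PW P1 y t + m * wfun PX PW P2 y t else 0)
        = pA PX (fun x t => l * P1 x t + m * P2 x t) a := by
      intro y a
      rw [pA_comb PX P1 P2 l m a, ← sum_fiber_wfun PX PW P1 hPX hPW hP1 y a,
        ← sum_fiber_wfun PX PW P2 hPX hPW hP2 y a]
      rw [Finset.mul_sum, Finset.mul_sum, ← Finset.sum_add_distrib]
      refine Finset.sum_congr rfl fun t _ => ?_
      by_cases h : t.2 = a <;> simp [h]
    have hsplit : ∀ x y t, 0 < pXYT PX PW (fun x t => l * P1 x t + m * P2 x t) x y t →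
        0 < pXYT PX PW P1 x y t ∨ 0 < pXYT PX PW P2 x y t := by
      intro x y t h
      by_contra hc
      push_neg at hc
      rw [pXYT_comb] at h
      have n1 : 0 ≤ pXYT PX PW P1 x y t := pXYT_nonneg PX PW P1 hPX.1
        (fun a x y => (hPW a x).1 y) (fun x t => (hP1 x).1 t) x y t
      have n2 : 0 ≤ pXYT PX PW P2 x y t := pXYT_nonneg PX PW P2 hPX.1
        (fun a x y => (hPW a x).1 y) (fun x t => (hP2 x).1 t) x y t
      nlinarith [hc.1, hc.2]
    have hqpos : ∀ x y t, 0 < pXYT PX PW (fun x t => l * P1 x t + m * P2 x t) x y t →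
        0 < l * wfun PX PW P1 y t + m * wfun PX PW P2 y t := by
      intro x y t h
      rcases hsplit x y t h with h1 | h1
      · have := wfun_pos PX PW P1 hPXpos hPW hP1 h1
        have h2 := mul_nonneg hm (wfun_nonneg PX PW P2 hPX hPW hP2 y t)
        nlinarith
      · have := wfun_pos PX PW P2 hPXpos hPW hP2 h1
        have h2 := mul_nonneg hl (wfun_nonneg PX PW P1 hPX hPW hP1 y t)
        nlinarith
    have step1 : IXA PX (fun x t => l * P1 x t + m * P2 x t)
        + IXTcondYA PX PW (fun x t => l * P1 x t + m * P2 x t)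
        ≤ Phi PX PW (fun x t => l * P1 x t + m * P2 x t)
            (fun y t => l * wfun PX PW P1 y t + m * wfun PX PW P2 y t) := by
      rw [Ffun_eq_Phi_wfun PX PW _ hPX hPXpos hPW hPc]
      exact Phi_wfun_le PX PW _ hPX hPXpos hPW hPc _ hq0 hqm hqpos
    have step2 : Phi PX PW (fun x t => l * P1 x t + m * P2 x t)
            (fun y t => l * wfun PX PW P1 y t + m * wfun PX PW P2 y t)
        ≤ l * Phi PX PW P1 (wfun PX PW P1) + m * Phi PX PW P2 (wfun PX PW P2) := by
      have hr : ∑ x, ∑ y, ∑ t,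
          (l * (pXYT PX PW P1 x y t * Real.logb 2 (P1 x t / wfun PX PW P1 y t))
            + m * (pXYT PX PW P2 x y t * Real.logb 2 (P2 x t / wfun PX PW P2 y t)))
          = l * Phi PX PW P1 (wfun PX PW P1) + m * Phi PX PW P2 (wfun PX PW P2) := by
        unfold Phi
        refine sum_lin _ _ _ l m fun x => ?_
        refine sum_lin _ _ _ l m fun y => ?_
        refine sum_lin _ _ _ l m fun t => rfl
      rw [← hr]
      unfold Phi
      refine Finset.sum_le_sum fun x _ => Finset.sum_le_sum fun y _ =>
        Finset.sum_le_sum fun t _ => ?_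
      have hform : ∀ Q : X → Strat Y Xh A → ℝ,
          pXYT PX PW Q x y t = (PX x * PW t.2 x y) * Q x t := by
        intro Q
        unfold pXYT
        ring
      have hc0 : 0 ≤ PX x * PW t.2 x y := mul_nonneg (hPX.1 x) ((hPW t.2 x).1 y)
      rcases hc0.lt_or_eq with hcpos | hc0'
      · have base := LSI2 hl' hm' ((hP1 x).1 t) ((hP2 x).1 t)
          (wfun_nonneg PX PW P1 hPX hPW hP1 y t) (wfun_nonneg PX PW P2 hPX hPW hP2 y t)
          (fun hu => wfun_pos PX PW P1 hPXpos hPW hP1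
            (by rw [hform P1]; exact mul_pos hcpos hu))
          (fun hu => wfun_pos PX PW P2 hPXpos hPW hP2
            (by rw [hform P2]; exact mul_pos hcpos hu))
        have hmul := mul_le_mul_of_nonneg_left base hc0
        calc pXYT PX PW (fun x t => l * P1 x t + m * P2 x t) x y t *
              Real.logb 2 ((l * P1 x t + m * P2 x t)
                / (l * wfun PX PW P1 y t + m * wfun PX PW P2 y t))
            = (PX x * PW t.2 x y) * ((l * P1 x t + m * P2 x t) *
                Real.logb 2 ((l * P1 x t + m * P2 x t)
                  / (l * wfun PX PW P1 y t + m * wfun PX PW P2 y t))) := by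
              rw [hform]
              ring
          _ ≤ (PX x * PW t.2 x y) *
                (l * (P1 x t * Real.logb 2 (P1 x t / wfun PX PW P1 y t))
                  + m * (P2 x t * Real.logb 2 (P2 x t / wfun PX PW P2 y t))) := hmul
          _ = l * (pXYT PX PW P1 x y t * Real.logb 2 (P1 x t / wfun PX PW P1 y t))
                + m * (pXYT PX PW P2 x y t * Real.logb 2 (P2 x t / wfun PX PW P2 y t)) := by
              rw [hform P1, hform P2]
              ring
      · rw [hform, hform P1, hform P2, ← hc0']
        simp
    have e1 : Phi PX PW P1 (wfun PX PW P1) = IXA PX P1 + IXTcondYA PX PW P1 :=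
      (Ffun_eq_Phi_wfun PX PW P1 hPX hPXpos hPW hP1).symm
    have e2 : Phi PX PW P2 (wfun PX PW P2) = IXA PX P2 + IXTcondYA PX PW P2 :=
      (Ffun_eq_Phi_wfun PX PW P2 hPX hPXpos hPW hP2).symm
    rw [e1, e2] at step2
    exact le_trans step1 step2
  · -- m = 0, l = 1
    have hl1 : l = 1 := by linarith
    have hfun : (fun x t => l * P1 x t + m * P2 x t) = P1 := by
      funext x t
      rw [hl1, ← hm']
      ring
    rw [hfun, hl1, ← hm']
    ring_nf
    exact le_rfl
  · -- l = 0, m = 1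
    have hm1 : m = 1 := by linarith
    have hfun : (fun x t => l * P1 x t + m * P2 x t) = P2 := by
      funext x t
      rw [hm1, ← hl']
      ring
    rw [hfun, hm1, ← hl']
    ring_nf
    exact le_rfl

end RDCaux
namespace RDCaux
set_option linter.unusedSectionVars false
set_option maxHeartbeats 2000000

open Finset Real Filter Topology

variable {X Y A Xh : Type} [Fintype X] [Fintype Y] [Fintype A] [Fintype Xh]
  [DecidableEq X] [DecidableEq Y] [DecidableEq A] [DecidableEq Xh]
  [Nonempty X] [Nonempty Y] [Nonempty A] [Nonempty Xh]

variable (PX : X → ℝ) (PW : A → X → Y → ℝ) (dist : X → Xh → ℝ) (cost : A → ℝ)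

lemma contOn_Jfun (hPX : IsPMF PX) (hPXpos : ∀ x, 0 < PX x) (hPW : ∀ a x, IsPMF (PW a x))
    (s m : ℝ) : ContinuousOn (Jfun PX PW dist cost s m) (Kset X Y A Xh) := by
  have h1 := contOn_Ffun (Xh := Xh) PX PW hPX hPXpos hPW
  have h2 : Continuous fun P : X → Strat Y Xh A → ℝ => s * expDist PX PW dist P :=
    continuous_const.mul (cont_expDist PX PW dist)
  have h3 : Continuous fun P : X → Strat Y Xh A → ℝ => m * expCost PX cost P :=
    continuous_const.mul (cont_expCost (X := X) (Y := Y) (A := A) (Xh := Xh) PX cost)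
  exact (h1.sub h2.continuousOn).sub h3.continuousOn

lemma exists_Jfun_min (hPX : IsPMF PX) (hPXpos : ∀ x, 0 < PX x)
    (hPW : ∀ a x, IsPMF (PW a x)) (s m : ℝ) :
    ∃ Pg, IsCondPMF Pg ∧ ∀ P : X → Strat Y Xh A → ℝ, IsCondPMF P →
      Jfun PX PW dist cost s m Pg ≤ Jfun PX PW dist cost s m P := by
  obtain ⟨Pg, hPgK, hmin⟩ := isCompact_K.exists_isMinOn nonempty_K
    (contOn_Jfun PX PW dist cost hPX hPXpos hPW s m)
  exact ⟨Pg, hPgK, fun P hP => isMinOn_iff.mp hmin P hP⟩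

lemma Jmin_eq (s m : ℝ) {Pg : X → Strat Y Xh A → ℝ} (hPg : IsCondPMF Pg)
    (hmin : ∀ P : X → Strat Y Xh A → ℝ, IsCondPMF P →
      Jfun PX PW dist cost s m Pg ≤ Jfun PX PW dist cost s m P) :
    Jmin PX PW dist cost s m = Jfun PX PW dist cost s m Pg := by
  refine IsLeast.csInf_eq ⟨⟨Pg, hPg, rfl⟩, ?_⟩
  rintro r ⟨PT, hPT, rfl⟩
  exact hmin PT hPT

section feasible

variable (D C : ℝ)

/-- The feasible set. -/
def Kc (PX : X → ℝ) (PW : A → X → Y → ℝ) (dist : X → Xh → ℝ) (cost : A → ℝ) (D C : ℝ) :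
    Set (X → Strat Y Xh A → ℝ) :=
  Kset X Y A Xh ∩ ({P | expDist PX PW dist P ≤ D} ∩ {P | expCost PX cost P ≤ C})

lemma isCompact_Kc : IsCompact (Kc (X := X) (Y := Y) (A := A) (Xh := Xh) PX PW dist cost D C) :=
  isCompact_K.inter_right
    ((isClosed_le (cont_expDist PX PW dist) continuous_const).inter
      (isClosed_le (cont_expCost (X := X) (Y := Y) (A := A) (Xh := Xh) PX cost)
        continuous_const))

lemma nonempty_Kc (hPW : ∀ a x, IsPMF (PW a x)) (hdist0 : ∀ x, ∃ xh, dist x xh = 0)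
    (hcost0 : ∃ a, cost a = 0) (hD : 0 ≤ D) (hC : 0 ≤ C) :
    (Kc (X := X) (Y := Y) (A := A) (Xh := Xh) PX PW dist cost D C).Nonempty := by
  obtain ⟨a0, ha0⟩ := hcost0
  classical
  set Pz : X → Strat Y Xh A → ℝ :=
    fun x t => if t = ((fun _ : Y => (hdist0 x).choose), a0) then 1 else 0 with hPz
  have hPzK : IsCondPMF Pz := by
    intro x
    constructor
    · intro t
      rw [hPz]
      dsimp only
      split <;> norm_num
    · rw [hPz]
      simp
  have hG : expDist PX PW dist Pz = 0 := by
    unfold expDist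
    refine Finset.sum_eq_zero fun x _ => Finset.sum_eq_zero fun y _ =>
      Finset.sum_eq_zero fun t _ => ?_
    by_cases h : t = ((fun _ : Y => (hdist0 x).choose), a0)
    · have : dist x (t.1 y) = 0 := by
        rw [h]
        exact (hdist0 x).choose_spec
      rw [this, mul_zero]
    · have : Pz x t = 0 := by
        rw [hPz]
        simp [h]
      unfold pXYT
      rw [this]
      ring
  have hH : expCost PX cost Pz = 0 := by
    unfold expCost
    refine Finset.sum_eq_zero fun x _ => Finset.sum_eq_zero fun t _ => ?_
    by_cases h : t = ((fun _ : Y => (hdist0 x).choose), a0)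
    · have : cost t.2 = 0 := by
        rw [h]
        exact ha0
      rw [this, mul_zero]
    · have : Pz x t = 0 := by
        rw [hPz]
        simp [h]
      rw [this]
      ring
  refine ⟨Pz, hPzK, ?_, ?_⟩
  · show expDist PX PW dist Pz ≤ D
    rw [hG]
    exact hD
  · show expCost PX cost Pz ≤ C
    rw [hH]
    exact hC

lemma exists_RDC_min (hPX : IsPMF PX) (hPXpos : ∀ x, 0 < PX x)
    (hPW : ∀ a x, IsPMF (PW a x)) (hdist0 : ∀ x, ∃ xh, dist x xh = 0)
    (hcost0 : ∃ a, cost a = 0) (hD : 0 ≤ D) (hC : 0 ≤ C) :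
    ∃ Pm : X → Strat Y Xh A → ℝ, IsCondPMF Pm ∧ expDist PX PW dist Pm ≤ D ∧
      expCost PX cost Pm ≤ C ∧
      RDC PX PW dist cost D C = IXA PX Pm + IXTcondYA PX PW Pm ∧
      (∀ P : X → Strat Y Xh A → ℝ, IsCondPMF P → expDist PX PW dist P ≤ D →
        expCost PX cost P ≤ C →
        IXA PX Pm + IXTcondYA PX PW Pm ≤ IXA PX P + IXTcondYA PX PW P) := by
  obtain ⟨Pm, hPmKc, hmin⟩ := (isCompact_Kc PX PW dist cost D C).exists_isMinOn
    (nonempty_Kc PX PW dist cost D C hPW hdist0 hcost0 hD hC)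
    ((contOn_Ffun PX PW hPX hPXpos hPW).mono Set.inter_subset_left)
  obtain ⟨hPmK, hPmG, hPmH⟩ := hPmKc
  have hminP : ∀ P : X → Strat Y Xh A → ℝ, IsCondPMF P → expDist PX PW dist P ≤ D →
      expCost PX cost P ≤ C →
      IXA PX Pm + IXTcondYA PX PW Pm ≤ IXA PX P + IXTcondYA PX PW P := by
    intro P h1 h2 h3
    exact isMinOn_iff.mp hmin P ⟨h1, h2, h3⟩
  refine ⟨Pm, hPmK, hPmG, hPmH, ?_, hminP⟩
  unfold RDC
  refine IsLeast.csInf_eq ⟨⟨Pm, hPmK, hPmG, hPmH, rfl⟩, ?_⟩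
  rintro r ⟨PT, h1, h2, h3, rfl⟩
  exact hminP PT h1 h2 h3

end feasible

end RDCaux
namespace RDCaux
set_option linter.unusedSectionVars false
set_option maxHeartbeats 2000000

open Finset Real Filter Topology

variable {X Y A Xh : Type} [Fintype X] [Fintype Y] [Fintype A] [Fintype Xh]
  [DecidableEq X] [DecidableEq Y] [DecidableEq A] [DecidableEq Xh]
  [Nonempty X] [Nonempty Y] [Nonempty A] [Nonempty Xh]

variable (PX : X → ℝ) (PW : A → X → Y → ℝ) (dist : X → Xh → ℝ) (cost : A → ℝ)

/-- The epigraph-like set used for the separation argument. -/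
def Eset (PX : X → ℝ) (PW : A → X → Y → ℝ) (dist : X → Xh → ℝ) (cost : A → ℝ) :
    Set (ℝ × ℝ × ℝ) :=
  {p | ∃ P : X → Strat Y Xh A → ℝ, IsCondPMF P ∧ expDist PX PW dist P ≤ p.1 ∧
    expCost PX cost P ≤ p.2.1 ∧ IXA PX P + IXTcondYA PX PW P ≤ p.2.2}

lemma convex_E (hPX : IsPMF PX) (hPXpos : ∀ x, 0 < PX x) (hPW : ∀ a x, IsPMF (PW a x)) :
    Convex ℝ (Eset PX PW dist cost) := by
  rintro p ⟨Pp, hPp, hp1, hp2, hp3⟩ q ⟨Pq, hPq, hq1, hq2, hq3⟩ a b ha hb hab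
  refine ⟨fun x t => a * Pp x t + b * Pq x t,
    IsCondPMF_comb Pp Pq a b hPp hPq ha hb hab, ?_, ?_, ?_⟩
  · show expDist PX PW dist (fun x t => a * Pp x t + b * Pq x t) ≤ (a • p + b • q).1
    rw [expDist_comb]
    have h1 : (a • p + b • q).1 = a * p.1 + b * q.1 := rfl
    rw [h1]
    exact add_le_add (mul_le_mul_of_nonneg_left hp1 ha) (mul_le_mul_of_nonneg_left hq1 hb)
  · show expCost PX cost (fun x t => a * Pp x t + b * Pq x t) ≤ (a • p + b • q).2.1
    rw [expCost_comb]
    have h1 : (a • p + b • q).2.1 = a * p.2.1 + b * q.2.1 := rfl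
    rw [h1]
    exact add_le_add (mul_le_mul_of_nonneg_left hp2 ha) (mul_le_mul_of_nonneg_left hq2 hb)
  · show IXA PX (fun x t => a * Pp x t + b * Pq x t)
        + IXTcondYA PX PW (fun x t => a * Pp x t + b * Pq x t) ≤ (a • p + b • q).2.2
    have h1 : (a • p + b • q).2.2 = a * p.2.2 + b * q.2.2 := rfl
    rw [h1]
    refine le_trans (Ffun_convex PX PW hPX hPXpos hPW Pp Pq hPp hPq ha hb hab) ?_
    exact add_le_add (mul_le_mul_of_nonneg_left hp3 ha) (mul_le_mul_of_nonneg_left hq3 hb)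

lemma closed_E (hPX : IsPMF PX) (hPXpos : ∀ x, 0 < PX x) (hPW : ∀ a x, IsPMF (PW a x)) :
    IsClosed (Eset PX PW dist cost) := by
  refine IsSeqClosed.isClosed ?_
  intro u p hu hup
  choose Pn hPn h1 h2 h3 using hu
  obtain ⟨Pl, hPlK, φ, hφ, hconv⟩ := isCompact_K.tendsto_subseq (x := Pn) hPn
  have hsub : Tendsto (u ∘ φ) atTop (𝓝 p) := hup.comp hφ.tendsto_atTop
  refine ⟨Pl, hPlK, ?_, ?_, ?_⟩
  · have t1 : Tendsto (fun n => expDist PX PW dist (Pn (φ n))) atTop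
        (𝓝 (expDist PX PW dist Pl)) := ((cont_expDist PX PW dist).tendsto Pl).comp hconv
    have t2 : Tendsto (fun n => (u (φ n)).1) atTop (𝓝 p.1) :=
      (continuous_fst.tendsto p).comp hsub
    exact le_of_tendsto_of_tendsto' t1 t2 fun n => h1 (φ n)
  · have t1 : Tendsto (fun n => expCost PX cost (Pn (φ n))) atTop
        (𝓝 (expCost PX cost Pl)) :=
      ((cont_expCost (X := X) (Y := Y) (A := A) (Xh := Xh) PX cost).tendsto Pl).comp hconv
    have t2 : Tendsto (fun n => (u (φ n)).2.1) atTop (𝓝 p.2.1) :=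
      ((continuous_fst.comp continuous_snd).tendsto p).comp hsub
    exact le_of_tendsto_of_tendsto' t1 t2 fun n => h2 (φ n)
  · have hin : Tendsto (fun n => Pn (φ n)) atTop (𝓝[Kset X Y A Xh] Pl) :=
      tendsto_nhdsWithin_iff.mpr ⟨hconv, Eventually.of_forall fun n => hPn (φ n)⟩
    have t1 : Tendsto (fun n => IXA PX (Pn (φ n)) + IXTcondYA PX PW (Pn (φ n))) atTop
        (𝓝 (IXA PX Pl + IXTcondYA PX PW Pl)) :=
      ((contOn_Ffun (Xh := Xh) PX PW hPX hPXpos hPW) Pl hPlK).tendsto.comp hin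
    have t2 : Tendsto (fun n => (u (φ n)).2.2) atTop (𝓝 p.2.2) :=
      ((continuous_snd.comp continuous_snd).tendsto p).comp hsub
    exact le_of_tendsto_of_tendsto' t1 t2 fun n => h3 (φ n)

end RDCaux
set_option maxHeartbeats 2000000 in
/-- Dual representation: for every `D ≥ 0` and `C ≥ 0`,
`R(D,C) = max_{s ≤ 0, m ≤ 0} ( R_{s,m} + s (D − D_{s,m}) + m (C − C_{s,m}) )`, where
`R_{s,m}, D_{s,m}, C_{s,m}` are defined from a minimizer `P*_{T|X}` of the Lagrangian. -/
theorem RDC_dual_representation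
    {X Y A Xh : Type} [Fintype X] [Fintype Y] [Fintype A] [Fintype Xh]
    [DecidableEq X] [DecidableEq Y] [DecidableEq A] [DecidableEq Xh]
    [Nonempty X] [Nonempty Y] [Nonempty A] [Nonempty Xh]
    (PX : X → ℝ) (PW : A → X → Y → ℝ) (dist : X → Xh → ℝ) (cost : A → ℝ)
    (hPX : IsPMF PX) (hPXpos : ∀ x, 0 < PX x)
    (hPW : ∀ a x, IsPMF (PW a x))
    (hdist : ∀ x xh, 0 ≤ dist x xh) (hdist0 : ∀ x, ∃ xh, dist x xh = 0)
    (hcost : ∀ a, 0 ≤ cost a) (hcost0 : ∃ a, cost a = 0)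
    (D C : ℝ) (hD : 0 ≤ D) (hC : 0 ≤ C) :
    RDC PX PW dist cost D C =
      sSup { v : ℝ | ∃ s : ℝ, s ≤ 0 ∧ ∃ m : ℝ, m ≤ 0 ∧
        ∃ Pstar : X → Strat Y Xh A → ℝ, IsCondPMF Pstar ∧
          (∀ PT : X → Strat Y Xh A → ℝ, IsCondPMF PT →
            Jfun PX PW dist cost s m Pstar ≤ Jfun PX PW dist cost s m PT) ∧
          v = (s * expDist PX PW dist Pstar + m * expCost PX cost Pstar +
                Jmin PX PW dist cost s m) +
              s * (D - expDist PX PW dist Pstar) +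
              m * (C - expCost PX cost Pstar) } := by
  classical
  set V := { v : ℝ | ∃ s : ℝ, s ≤ 0 ∧ ∃ m : ℝ, m ≤ 0 ∧
        ∃ Pstar : X → Strat Y Xh A → ℝ, IsCondPMF Pstar ∧
          (∀ PT : X → Strat Y Xh A → ℝ, IsCondPMF PT →
            Jfun PX PW dist cost s m Pstar ≤ Jfun PX PW dist cost s m PT) ∧
          v = (s * expDist PX PW dist Pstar + m * expCost PX cost Pstar +
                Jmin PX PW dist cost s m) +
              s * (D - expDist PX PW dist Pstar) +
              m * (C - expCost PX cost Pstar) } with hV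
  obtain ⟨Pm, hPmK, hPmG, hPmH, hRDC, hPmMin⟩ :=
    RDCaux.exists_RDC_min PX PW dist cost D C hPX hPXpos hPW hdist0 hcost0 hD hC
  -- weak duality
  have hweak : ∀ v ∈ V, v ≤ IXA PX Pm + IXTcondYA PX PW Pm := by
    rintro v ⟨s, hs, m, hm, Pstar, hPstar, hPstarMin, rfl⟩
    have hJle : Jmin PX PW dist cost s m ≤ Jfun PX PW dist cost s m Pm := by
      rw [RDCaux.Jmin_eq PX PW dist cost s m hPstar hPstarMin]
      exact hPstarMin Pm hPmK
    have hJfunPm : Jfun PX PW dist cost s m Pm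
        = (IXA PX Pm + IXTcondYA PX PW Pm) - s * expDist PX PW dist Pm
          - m * expCost PX cost Pm := rfl
    have h1 : s * (D - expDist PX PW dist Pm) ≤ 0 :=
      mul_nonpos_of_nonpos_of_nonneg hs (by linarith)
    have h2 : m * (C - expCost PX cost Pm) ≤ 0 :=
      mul_nonpos_of_nonpos_of_nonneg hm (by linarith)
    have hv : (s * expDist PX PW dist Pstar + m * expCost PX cost Pstar +
          Jmin PX PW dist cost s m) + s * (D - expDist PX PW dist Pstar) +
          m * (C - expCost PX cost Pstar)
        = Jmin PX PW dist cost s m + s * D + m * C := by ring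
    rw [hv]
    have : Jfun PX PW dist cost s m Pm + s * D + m * C
        = (IXA PX Pm + IXTcondYA PX PW Pm) + s * (D - expDist PX PW dist Pm)
          + m * (C - expCost PX cost Pm) := by
      rw [hJfunPm]
      ring
    linarith [hJle]
  have hVne : V.Nonempty := by
    obtain ⟨Pg, hPgK, hGmin⟩ :=
      RDCaux.exists_Jfun_min PX PW dist cost hPX hPXpos hPW 0 0
    exact ⟨_, 0, le_rfl, 0, le_rfl, Pg, hPgK, hGmin, rfl⟩
  have hbdd : BddAbove V := ⟨IXA PX Pm + IXTcondYA PX PW Pm, fun v hv => hweak v hv⟩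
  rw [hRDC]
  refine le_antisymm ?_ (csSup_le hVne hweak)
  by_contra hlt
  push_neg at hlt
  set ε := (IXA PX Pm + IXTcondYA PX PW Pm) - sSup V with hε
  have hεpos : 0 < ε := by
    rw [hε]
    linarith
  -- separation
  have hmemE : (D, C, IXA PX Pm + IXTcondYA PX PW Pm) ∈ RDCaux.Eset PX PW dist cost :=
    ⟨Pm, hPmK, hPmG, hPmH, le_rfl⟩
  have hx0 : (D, C, (IXA PX Pm + IXTcondYA PX PW Pm) - ε) ∉ RDCaux.Eset PX PW dist cost := by
    rintro ⟨P', h1, h2, h3, h4⟩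
    have := hPmMin P' h1 h2 h3
    simp only at h4
    linarith
  obtain ⟨f, u, hfu, hux⟩ := geometric_hahn_banach_closed_point
    (RDCaux.convex_E PX PW dist cost hPX hPXpos hPW)
    (RDCaux.closed_E PX PW dist cost hPX hPXpos hPW) hx0
  set α := f (1, 0, 0) with hαdef
  set β := f (0, 1, 0) with hβdef
  set γ := f (0, 0, 1) with hγdef
  have feval : ∀ d c r : ℝ, f (d, c, r) = d * α + c * β + r * γ := by
    intro d c r
    have hdecomp : ((d, c, r) : ℝ × ℝ × ℝ)
        = d • ((1:ℝ), (0:ℝ), (0:ℝ)) + c • ((0:ℝ), (1:ℝ), (0:ℝ))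
          + r • ((0:ℝ), (0:ℝ), (1:ℝ)) := by
      simp only [Prod.smul_mk, smul_eq_mul, Prod.mk_add_mk, Prod.mk.injEq]
      norm_num
    rw [hdecomp, map_add, map_add, map_smul, map_smul, map_smul, smul_eq_mul, smul_eq_mul,
      smul_eq_mul, hαdef, hβdef, hγdef]
  have hγ : γ < 0 := by
    have h1 := hfu _ hmemE
    rw [feval] at h1
    rw [feval] at hux
    nlinarith [hεpos]
  have hα : α ≤ 0 := by
    by_contra hc
    push_neg at hc
    obtain ⟨n, hn⟩ := exists_nat_gt
      ((u - (D * α + C * β + (IXA PX Pm + IXTcondYA PX PW Pm) * γ)) / α)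
    have hmem : ((D + n : ℝ), C, IXA PX Pm + IXTcondYA PX PW Pm)
        ∈ RDCaux.Eset PX PW dist cost :=
      ⟨Pm, hPmK, by simp only; push_cast; linarith [n.cast_nonneg (α := ℝ)], hPmH, le_rfl⟩
    have hlt2 := hfu _ hmem
    rw [feval] at hlt2
    rw [div_lt_iff₀ hc] at hn
    linarith
  have hβ' : β ≤ 0 := by
    by_contra hc
    push_neg at hc
    obtain ⟨n, hn⟩ := exists_nat_gt
      ((u - (D * α + C * β + (IXA PX Pm + IXTcondYA PX PW Pm) * γ)) / β)
    have hmem : (D, (C + n : ℝ), IXA PX Pm + IXTcondYA PX PW Pm)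
        ∈ RDCaux.Eset PX PW dist cost :=
      ⟨Pm, hPmK, hPmG, by simp only; push_cast; linarith [n.cast_nonneg (α := ℝ)], le_rfl⟩
    have hlt2 := hfu _ hmem
    rw [feval] at hlt2
    rw [div_lt_iff₀ hc] at hn
    linarith
  set s := α / (-γ) with hsdef
  set m := β / (-γ) with hmdef
  have hγne : γ ≠ 0 := ne_of_lt hγ
  have hs : s ≤ 0 := div_nonpos_of_nonpos_of_nonneg hα (by linarith)
  have hm : m ≤ 0 := div_nonpos_of_nonpos_of_nonneg hβ' (by linarith)
  obtain ⟨Pg, hPgK, hGmin⟩ := RDCaux.exists_Jfun_min PX PW dist cost hPX hPXpos hPW s m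
  have hJ : Jmin PX PW dist cost s m = Jfun PX PW dist cost s m Pg :=
    RDCaux.Jmin_eq PX PW dist cost s m hPgK hGmin
  have hlb : u / γ ≤ Jfun PX PW dist cost s m Pg := by
    have hmem : (expDist PX PW dist Pg, expCost PX cost Pg, IXA PX Pg + IXTcondYA PX PW Pg)
        ∈ RDCaux.Eset PX PW dist cost := ⟨Pg, hPgK, le_rfl, le_rfl, le_rfl⟩
    have h1 := hfu _ hmem
    rw [feval] at h1
    have key : Jfun PX PW dist cost s m Pg - u / γ
        = (α * expDist PX PW dist Pg + β * expCost PX cost Pg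
            + γ * (IXA PX Pg + IXTcondYA PX PW Pg) - u) / γ := by
      show (IXA PX Pg + IXTcondYA PX PW Pg) - s * expDist PX PW dist Pg
          - m * expCost PX cost Pg - u / γ = _
      rw [hsdef, hmdef]
      field_simp [hγne]
      ring
    have hpos : 0 < (α * expDist PX PW dist Pg + β * expCost PX cost Pg
        + γ * (IXA PX Pg + IXTcondYA PX PW Pg) - u) / γ :=
      div_pos_of_neg_of_neg (by linarith) hγ
    linarith [key ▸ hpos]
  have hub : (IXA PX Pm + IXTcondYA PX PW Pm) - ε < s * D + m * C + u / γ := by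
    rw [feval] at hux
    have key : s * D + m * C + u / γ - ((IXA PX Pm + IXTcondYA PX PW Pm) - ε)
        = -((D * α + C * β + ((IXA PX Pm + IXTcondYA PX PW Pm) - ε) * γ - u) / γ) := by
      rw [hsdef, hmdef]
      field_simp [hγne]
      ring
    have hneg : (D * α + C * β + ((IXA PX Pm + IXTcondYA PX PW Pm) - ε) * γ - u) / γ < 0 :=
      div_neg_of_pos_of_neg (by linarith) hγ
    linarith [key ▸ (neg_pos.mpr hneg)]
  have hvV : (s * expDist PX PW dist Pg + m * expCost PX cost Pg +
        Jmin PX PW dist cost s m) + s * (D - expDist PX PW dist Pg) +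
        m * (C - expCost PX cost Pg) ∈ V :=
    ⟨s, hs, m, hm, Pg, hPgK, hGmin, rfl⟩
  have hveq : (s * expDist PX PW dist Pg + m * expCost PX cost Pg +
        Jmin PX PW dist cost s m) + s * (D - expDist PX PW dist Pg) +
        m * (C - expCost PX cost Pg) = Jmin PX PW dist cost s m + s * D + m * C := by
    ring
  have hle1 : (s * expDist PX PW dist Pg + m * expCost PX cost Pg +
        Jmin PX PW dist cost s m) + s * (D - expDist PX PW dist Pg) +
        m * (C - expCost PX cost Pg) ≤ sSup V := le_csSup hbdd hvV
  rw [hveq, hJ] at hle1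
  have : (IXA PX Pm + IXTcondYA PX PW Pm) - ε < sSup V := by linarith
  rw [hε] at this
  linarith
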